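/- Let N ≥ 1, 1 ≤ q < ∞, and let ũ, ṽ be nonnegative measurable functions on ℝ^N. Suppose there exists A > 0 such that (∫_{ℝ^N∖B(0,2|z|)} ũ(x) dx)^{1/q} ≤ A ṽ(z) for almost every z ∈ ℝ^N. Then there exists C > 0 such that [∫_{ℝ^N} (∫_{B(0,|x|/2)} g(z) dz)^q ũ(x) dx]^{1/q} ≤ C ∫_{ℝ^N} g(x) ṽ(x) dx for every nonnegative measurable function g on ℝ^N. -/

import Mathlib

open MeasureTheory Real

/-- Minkowski's integral inequality for `ENNReal`-valued kernels. -/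
theorem minkowski_lintegral_aux {α β : Type*} [MeasurableSpace α] [MeasurableSpace β]
    (μ : Measure α) (ν : Measure β) [SigmaFinite μ] [SigmaFinite ν]
    {q : ℝ} (hq1 : 1 ≤ q) {f : α → β → ENNReal} (hf : Measurable (Function.uncurry f)) :
    (∫⁻ x, (∫⁻ y, f x y ∂ν) ^ q ∂μ) ^ (1 / q)
      ≤ ∫⁻ y, (∫⁻ x, (f x y) ^ q ∂μ) ^ (1 / q) ∂ν := by
  have hq0 : (0:ℝ) < q := lt_of_lt_of_le one_pos hq1
  have hFmeas : Measurable fun x => ∫⁻ y, f x y ∂ν := hf.lintegral_prod_right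
  rcases eq_or_lt_of_le hq1 with hq | hq
  · -- q = 1
    subst hq
    simp only [ENNReal.rpow_one, one_div_one]
    rw [lintegral_lintegral_swap hf.aemeasurable]
  · -- q > 1
    set R := ∫⁻ y, (∫⁻ x, (f x y) ^ q ∂μ) ^ (1 / q) ∂ν with hR
    set p := Real.conjExponent q with hp
    have hpq : p.HolderConjugate q := (Real.HolderConjugate.conjExponent hq).symm
    set F := fun x => ∫⁻ y, f x y ∂ν with hF
    -- truncations
    set G : ℕ → α → ENNReal := fun n x =>
      (spanningSets μ n).indicator (fun x => (min (F x) n) ^ q) x with hG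
    have hGmeas : ∀ n, Measurable (G n) := fun n =>
      ((hFmeas.min measurable_const).pow_const q).indicator (measurableSet_spanningSets μ n)
    have key : ∀ n : ℕ, (∫⁻ x, G n x ∂μ) ^ (1/q) ≤ R := by
      intro n
      set μn := μ.restrict (spanningSets μ n) with hμn
      set Fn := fun x => min (F x) (n : ENNReal) with hFn
      have hFnmeas : Measurable Fn := hFmeas.min measurable_const
      have hIn : ∫⁻ x, G n x ∂μ = ∫⁻ x, Fn x ^ q ∂μn := by
        rw [hG, lintegral_indicator (measurableSet_spanningSets μ n)]
      set I := ∫⁻ x, Fn x ^ q ∂μn with hI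
      rw [hIn]
      -- I is finite
      have hIfin : I ≠ ⊤ := by
        have : I ≤ (n : ENNReal) ^ q * μn Set.univ := by
          rw [← lintegral_const]
          exact lintegral_mono fun x =>
            ENNReal.rpow_le_rpow (min_le_right _ _) hq0.le
        refine ne_top_of_le_ne_top ?_ this
        exact (ENNReal.mul_lt_top
          (ENNReal.rpow_lt_top_of_nonneg hq0.le (ENNReal.natCast_ne_top n))
          (by simpa [hμn] using measure_spanningSets_lt_top μ n)).ne
      rcases eq_or_ne I 0 with hI0 | hI0
      · rw [hI0, ENNReal.zero_rpow_of_pos (one_div_pos.mpr hq0)]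
        exact zero_le'
      -- main chain
      have step1 : I ≤ ∫⁻ x, Fn x ^ (q - 1) * F x ∂μn := by
        rw [hI]
        refine lintegral_mono fun x => ?_
        have : Fn x ^ q = Fn x ^ (q - 1) * Fn x := by
          rw [show q = (q-1)+1 by ring,
            ENNReal.rpow_add_of_nonneg _ _ (by linarith) zero_le_one,
            ENNReal.rpow_one]
          ring_nf
        rw [this]
        exact mul_le_mul_right (min_le_left _ _) _
      have step2 : ∫⁻ x, Fn x ^ (q - 1) * F x ∂μn
          = ∫⁻ y, ∫⁻ x, Fn x ^ (q - 1) * f x y ∂μn ∂ν := by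
        have : ∀ x, Fn x ^ (q-1) * F x = ∫⁻ y, Fn x ^ (q-1) * f x y ∂ν := fun x =>
          (lintegral_const_mul _ (hf.comp (measurable_prodMk_left))).symm
        simp_rw [this]
        exact lintegral_lintegral_swap
          (((hFnmeas.comp measurable_fst).pow_const _).mul hf).aemeasurable
      have step3 : ∀ y, ∫⁻ x, Fn x ^ (q - 1) * f x y ∂μn
          ≤ I ^ (1/p) * (∫⁻ x, (f x y) ^ q ∂μn) ^ (1/q) := by
        intro y
        have hH := ENNReal.lintegral_mul_le_Lp_mul_Lq μn hpq
          ((hFnmeas.pow_const (q-1)).aemeasurable)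
          ((hf.comp (measurable_prodMk_right (y := y))).aemeasurable)
        refine le_trans (le_of_eq ?_) (le_trans hH (le_of_eq ?_))
        · rfl
        · congr 1
          congr 1
          refine lintegral_congr fun x => ?_
          rw [← ENNReal.rpow_mul]
          congr 1
          rw [hp, Real.conjExponent, mul_div_assoc',
            mul_div_cancel_left₀ _ (sub_ne_zero.mpr hq.ne')]
      have step4 : I ≤ I ^ (1/p) * R := by
        calc I ≤ ∫⁻ y, I ^ (1/p) * (∫⁻ x, (f x y) ^ q ∂μn) ^ (1/q) ∂ν :=
              step1.trans (step2.le.trans (lintegral_mono fun y => step3 y))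
          _ = I ^ (1/p) * ∫⁻ y, (∫⁻ x, (f x y) ^ q ∂μn) ^ (1/q) ∂ν :=
              lintegral_const_mul _
                ((Measurable.lintegral_prod_right' (ν := μn)
                  ((hf.comp measurable_swap).pow_const q)).pow_const _)
          _ ≤ I ^ (1/p) * R := by
              refine mul_le_mul_right (lintegral_mono fun y => ?_) _
              exact ENNReal.rpow_le_rpow
                (lintegral_mono' Measure.restrict_le_self le_rfl) (one_div_pos.mpr hq0).le
      -- conclude I^(1/q) ≤ R
      have hsplit : I ^ (1/p) * I ^ (1/q) = I := by
        rw [← ENNReal.rpow_add_of_nonneg _ _ hpq.one_div_nonneg hpq.symm.one_div_nonneg]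
        rw [show 1/p + 1/q = 1 by
          have := hpq.inv_add_inv_eq_one
          rw [one_div, one_div]; linarith]
        exact ENNReal.rpow_one I
      have hpfin : I ^ (1/p) ≠ ⊤ := ENNReal.rpow_ne_top_of_nonneg hpq.one_div_nonneg hIfin
      have hp0 : I ^ (1/p) ≠ 0 := by
        simp only [ne_eq, ENNReal.rpow_eq_zero_iff, not_or]
        constructor
        · rintro ⟨h, -⟩; exact hI0 h
        · rintro ⟨h, -⟩; exact hIfin h
      rw [← ENNReal.mul_le_mul_iff_right hp0 hpfin, hsplit]
      exact step4
    -- monotone convergence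
    have hmono : Monotone G := by
      intro m n hmn x
      by_cases hx : x ∈ spanningSets μ m
      · have hx' : x ∈ spanningSets μ n := monotone_spanningSets μ hmn hx
        simp only [hG, Set.indicator_of_mem hx, Set.indicator_of_mem hx']
        exact ENNReal.rpow_le_rpow
          (inf_le_inf le_rfl (by exact_mod_cast Nat.cast_le.mpr hmn)) hq0.le
      · simp [hG, Set.indicator_of_notMem hx]
    have hsup : ∀ x, ⨆ n, G n x = F x ^ q := by
      intro x
      refine le_antisymm (iSup_le fun n => ?_) ?_
      · by_cases hx : x ∈ spanningSets μ n
        · simp only [hG, Set.indicator_of_mem hx]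
          exact ENNReal.rpow_le_rpow (min_le_left _ _) hq0.le
        · simp [hG, Set.indicator_of_notMem hx]
      · obtain ⟨N0, hN0⟩ : ∃ n, x ∈ spanningSets μ n := by
          have : x ∈ ⋃ n, spanningSets μ n := by
            rw [iUnion_spanningSets]; trivial
          exact Set.mem_iUnion.mp this
      
        by_cases hFx : F x = ⊤
        · rw [hFx, ENNReal.top_rpow_of_pos hq0]
          have hk : ∀ k : ℕ, (k : ENNReal) ≤ ⨆ n, G n x := by
            intro k
            have hxk : x ∈ spanningSets μ (max N0 k) :=
              monotone_spanningSets μ (le_max_left _ _) hN0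
            have hGk : G (max N0 k) x = ((max N0 k : ℕ) : ENNReal) ^ q := by
              simp [hG, Set.indicator_of_mem hxk, hFx]
            have h1 : (k : ENNReal) ≤ ((max N0 k : ℕ) : ENNReal) ^ q := by
              rcases Nat.eq_zero_or_pos k with hk0 | hk0
              · simp [hk0]
              · calc (k : ENNReal) ≤ ((max N0 k : ℕ) : ENNReal) := by
                      exact_mod_cast Nat.cast_le.mpr (le_max_right _ _)
                  _ = ((max N0 k : ℕ) : ENNReal) ^ (1 : ℝ) := (ENNReal.rpow_one _).symm
                  _ ≤ ((max N0 k : ℕ) : ENNReal) ^ q := by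
                      refine ENNReal.rpow_le_rpow_of_exponent_le ?_ hq1
                      exact_mod_cast Nat.one_le_cast.mpr (le_trans hk0 (le_max_right _ _))
            exact h1.trans (hGk ▸ le_iSup (fun n => G n x) (max N0 k))
          have : (⊤ : ENNReal) ≤ ⨆ n, G n x := by
            rw [← ENNReal.iSup_natCast]
            exact iSup_le hk
          exact this
        · obtain ⟨k, hk⟩ := ENNReal.exists_nat_gt hFx
          have hxk : x ∈ spanningSets μ (max N0 k) :=
            monotone_spanningSets μ (le_max_left _ _) hN0
          have : G (max N0 k) x = F x ^ q := by
            simp only [hG, Set.indicator_of_mem hxk]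
            congr 1
            refine min_eq_left (hk.le.trans ?_)
            exact_mod_cast Nat.cast_le.mpr (le_max_right _ _)
          exact this ▸ le_iSup (fun n => G n x) (max N0 k)
    have h1 : ∀ n, ∫⁻ x, G n x ∂μ ≤ R ^ q := by
      intro n
      calc ∫⁻ x, G n x ∂μ = ((∫⁻ x, G n x ∂μ) ^ (1/q)) ^ q := by
            rw [← ENNReal.rpow_mul, one_div, inv_mul_cancel₀ hq0.ne', ENNReal.rpow_one]
        _ ≤ R ^ q := ENNReal.rpow_le_rpow (key n) hq0.le
    have h2 : ∫⁻ x, F x ^ q ∂μ ≤ R ^ q := by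
      calc ∫⁻ x, F x ^ q ∂μ = ∫⁻ x, ⨆ n, G n x ∂μ :=
            lintegral_congr fun x => (hsup x).symm
        _ = ⨆ n, ∫⁻ x, G n x ∂μ := lintegral_iSup hGmeas hmono
        _ ≤ R ^ q := iSup_le h1
    calc (∫⁻ x, (∫⁻ y, f x y ∂ν) ^ q ∂μ) ^ (1 / q)
          ≤ (R ^ q) ^ (1/q) := ENNReal.rpow_le_rpow h2 (one_div_pos.mpr hq0).le
      _ = R := by
          rw [← ENNReal.rpow_mul, mul_one_div, div_self hq0.ne', ENNReal.rpow_one]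

theorem weighted_hardy_ball_sufficiency (N : ℕ) (hN : 1 ≤ N) (q : ℝ)
    (hq1 : 1 ≤ q)
    (u v : EuclideanSpace ℝ (Fin N) → ℝ)
    (hu0 : ∀ x, 0 ≤ u x) (hv0 : ∀ x, 0 ≤ v x)
    (humeas : Measurable u) (hvmeas : Measurable v)
    (A : ℝ) (hA : 0 < A)
    (hcond : ∀ᵐ z : EuclideanSpace ℝ (Fin N),
      (∫⁻ x in (Metric.ball (0 : EuclideanSpace ℝ (Fin N)) (2 * ‖z‖))ᶜ,
          ENNReal.ofReal (u x)) ^ (1 / q) ≤ ENNReal.ofReal (A * v z)) :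
    ∃ C : ℝ, 0 < C ∧ ∀ g : EuclideanSpace ℝ (Fin N) → ℝ,
      Measurable g → (∀ x, 0 ≤ g x) →
      (∫⁻ x, (∫⁻ z in Metric.ball (0 : EuclideanSpace ℝ (Fin N)) (‖x‖ / 2),
            ENNReal.ofReal (g z)) ^ q * ENNReal.ofReal (u x)) ^ (1 / q)
        ≤ ENNReal.ofReal C * ∫⁻ x, ENNReal.ofReal (g x * v x) := by
  classical
  have hq0 : (0:ℝ) < q := lt_of_lt_of_le one_pos hq1
  refine ⟨A, hA, fun g hg hg0 => ?_⟩
  set μ : Measure (EuclideanSpace ℝ (Fin N)) := volume.withDensity (fun x => ENNReal.ofReal (u x)) with hμ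
  haveI : SigmaFinite μ := SigmaFinite.withDensity_ofReal u
  set f : (EuclideanSpace ℝ (Fin N)) → (EuclideanSpace ℝ (Fin N)) → ENNReal := fun x z =>
    (Metric.ball (0:(EuclideanSpace ℝ (Fin N))) (‖x‖/2)).indicator (fun z => ENNReal.ofReal (g z)) z with hf
  have hsm : MeasurableSet {p : (EuclideanSpace ℝ (Fin N)) × (EuclideanSpace ℝ (Fin N)) | ‖p.2‖ < ‖p.1‖ / 2} :=
    measurableSet_lt measurable_snd.norm (measurable_fst.norm.div_const 2)
  have hfeq : Function.uncurry f = Set.indicator {p : (EuclideanSpace ℝ (Fin N)) × (EuclideanSpace ℝ (Fin N)) | ‖p.2‖ < ‖p.1‖/2}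
      (fun p => ENNReal.ofReal (g p.2)) := by
    funext p
    simp only [Function.uncurry, hf, Set.indicator, Metric.mem_ball, dist_zero_right,
      Set.mem_setOf_eq]
  have hfm : Measurable (Function.uncurry f) := by
    rw [hfeq]
    exact Measurable.indicator (by fun_prop) hsm
  have hFmeas : Measurable fun x => ∫⁻ z, f x z := hfm.lintegral_prod_right
  have hL : ∫⁻ x, (∫⁻ z in Metric.ball (0:(EuclideanSpace ℝ (Fin N))) (‖x‖/2), ENNReal.ofReal (g z)) ^ q
        * ENNReal.ofReal (u x)
      = ∫⁻ x, (∫⁻ z, f x z) ^ q ∂μ := by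
    rw [hμ, lintegral_withDensity_eq_lintegral_mul _ humeas.ennreal_ofReal
      (hFmeas.pow_const q)]
    refine lintegral_congr fun x => ?_
    simp only [Pi.mul_apply]
    rw [hf]
    rw [lintegral_indicator measurableSet_ball]
    exact mul_comm _ _
  have hpt : ∀ᵐ z : (EuclideanSpace ℝ (Fin N)), (∫⁻ x, (f x z)^q ∂μ)^(1/q)
      ≤ ENNReal.ofReal A * ENNReal.ofReal (g z * v z) := by
    filter_upwards [hcond] with z hz
    have hTm : MeasurableSet {x : (EuclideanSpace ℝ (Fin N)) | ‖z‖ < ‖x‖/2} :=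
      measurableSet_lt measurable_const (measurable_norm.div_const 2)
    have hTz : (fun x => (f x z)^q)
        = Set.indicator {x : (EuclideanSpace ℝ (Fin N)) | ‖z‖ < ‖x‖/2} (fun _ => ENNReal.ofReal (g z)^q) := by
      funext x
      simp only [hf, Set.indicator, Metric.mem_ball, dist_zero_right, Set.mem_setOf_eq]
      by_cases h : ‖z‖ < ‖x‖/2 <;> simp [h, ENNReal.zero_rpow_of_pos hq0]
    have hcalc : ∫⁻ x, (f x z)^q ∂μ
        = ENNReal.ofReal (g z)^q * μ {x : (EuclideanSpace ℝ (Fin N)) | ‖z‖ < ‖x‖/2} := by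
      rw [hTz, lintegral_indicator hTm, setLIntegral_const]
    have hsub : μ {x : (EuclideanSpace ℝ (Fin N)) | ‖z‖ < ‖x‖/2}
        ≤ ∫⁻ x in (Metric.ball (0:(EuclideanSpace ℝ (Fin N))) (2 * ‖z‖))ᶜ, ENNReal.ofReal (u x) := by
      rw [hμ, withDensity_apply _ hTm]
      refine lintegral_mono_set fun x hx => ?_
      simp only [Set.mem_setOf_eq] at hx
      simp only [Set.mem_compl_iff, Metric.mem_ball, dist_zero_right, not_lt]
      linarith
    calc (∫⁻ x, (f x z)^q ∂μ)^(1/q)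
        = ENNReal.ofReal (g z) * (μ {x : (EuclideanSpace ℝ (Fin N)) | ‖z‖ < ‖x‖/2})^(1/q) := by
          rw [hcalc, ENNReal.mul_rpow_of_nonneg _ _ (one_div_pos.mpr hq0).le,
            ← ENNReal.rpow_mul, mul_one_div, div_self hq0.ne', ENNReal.rpow_one]
      _ ≤ ENNReal.ofReal (g z) * ENNReal.ofReal (A * v z) := by
          refine mul_le_mul_right (le_trans ?_ hz) _
          exact ENNReal.rpow_le_rpow hsub (one_div_pos.mpr hq0).le
      _ = ENNReal.ofReal A * ENNReal.ofReal (g z * v z) := by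
          rw [ENNReal.ofReal_mul hA.le, ENNReal.ofReal_mul (hg0 z)]
          ring
  calc (∫⁻ x, (∫⁻ z in Metric.ball (0:(EuclideanSpace ℝ (Fin N))) (‖x‖/2), ENNReal.ofReal (g z)) ^ q
          * ENNReal.ofReal (u x)) ^ (1/q)
      = (∫⁻ x, (∫⁻ z, f x z) ^ q ∂μ) ^ (1/q) := by rw [hL]
    _ ≤ ∫⁻ z, (∫⁻ x, (f x z)^q ∂μ)^(1/q) :=
        minkowski_lintegral_aux μ volume hq1 hfm
    _ ≤ ∫⁻ z, ENNReal.ofReal A * ENNReal.ofReal (g z * v z) := lintegral_mono_ae hpt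
    _ = ENNReal.ofReal A * ∫⁻ z, ENNReal.ofReal (g z * v z) :=
        lintegral_const_mul' _ _ ENNReal.ofReal_ne_top
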